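/- Let Ω be a real symmetric positive definite n×n matrix, φ ∈ ℝⁿ with φ ≠ 0, μ ∈ [0,1), and m² = 1 + ‖φ‖². Then the directional-forgetting update Ω' = Ω − μ · Ω φ φᵀ Ω / (φᵀΩφ) + φφᵀ/m² satisfies Ω' ≽ (1−μ)Ω in the Loewner order; in particular Ω' is symmetric positive definite. -/

import Mathlib

open Matrix

private lemma dot_vecMulVec {n : ℕ} (u v x y : Fin n → ℝ) :
    x ⬝ᵥ (vecMulVec u v) *ᵥ y = (x ⬝ᵥ u) * (v ⬝ᵥ y) := by
  simp only [dotProduct, mulVec, vecMulVec_apply, Finset.sum_mul_sum]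
  refine Finset.sum_congr rfl fun i _ => ?_
  simp only [dotProduct, Finset.mul_sum]
  refine Finset.sum_congr rfl fun j _ => ?_
  ring

/-- Directional-forgetting update of a symmetric positive definite matrix:
`Ω' = Ω − μ · Ω φ φᵀ Ω / (φᵀ Ω φ) + φ φᵀ / (1 + ‖φ‖²)` satisfies `Ω' ≽ (1 − μ) Ω`
in the Loewner order; in particular `Ω'` is symmetric positive definite. -/
theorem directional_forgetting_posDef {n : ℕ} (Ω : Matrix (Fin n) (Fin n) ℝ)
    (hΩ : Ω.PosDef) (φ : Fin n → ℝ) (hφ : φ ≠ 0) (μ : ℝ) (hμ0 : 0 ≤ μ) (hμ1 : μ < 1) :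
    Matrix.PosSemidef
      ((Ω - (μ * (φ ⬝ᵥ (Ω *ᵥ φ))⁻¹) • vecMulVec (Ω *ᵥ φ) (Ω *ᵥ φ)
          + (1 + φ ⬝ᵥ φ)⁻¹ • vecMulVec φ φ) - (1 - μ) • Ω) ∧
    Matrix.PosDef
      (Ω - (μ * (φ ⬝ᵥ (Ω *ᵥ φ))⁻¹) • vecMulVec (Ω *ᵥ φ) (Ω *ᵥ φ)
          + (1 + φ ⬝ᵥ φ)⁻¹ • vecMulVec φ φ) := by
  set s : ℝ := φ ⬝ᵥ (Ω *ᵥ φ) with hs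
  have hs_pos : 0 < s := by
    have := (posDef_iff_dotProduct_mulVec.mp hΩ).2 hφ
    simpa [hs] using this
  have hm : (0:ℝ) < 1 + φ ⬝ᵥ φ := by
    have : (0:ℝ) ≤ φ ⬝ᵥ φ :=
      Finset.sum_nonneg fun i _ => mul_self_nonneg (φ i)
    linarith
  have hΩsym : ∀ i j, Ω j i = Ω i j := fun i j => by
    have := congrFun (congrFun hΩ.isHermitian.eq i) j
    simpa [conjTranspose_apply] using this
  have hsymm : ∀ x : Fin n → ℝ, φ ⬝ᵥ (Ω *ᵥ x) = x ⬝ᵥ (Ω *ᵥ φ) := by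
    intro x
    simp only [dotProduct, mulVec, Finset.mul_sum]
    rw [Finset.sum_comm]
    refine Finset.sum_congr rfl fun i _ => Finset.sum_congr rfl fun j _ => ?_
    rw [hΩsym]; ring
  -- quadratic form inequality
  have key : ∀ x : Fin n → ℝ,
      0 ≤ x ⬝ᵥ (((Ω - (μ * s⁻¹) • vecMulVec (Ω *ᵥ φ) (Ω *ᵥ φ)
          + (1 + φ ⬝ᵥ φ)⁻¹ • vecMulVec φ φ) - (1 - μ) • Ω) *ᵥ x) := by
    intro x
    have hcs : (x ⬝ᵥ (Ω *ᵥ φ))^2 ≤ (x ⬝ᵥ (Ω *ᵥ x)) * s := by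
      set c : ℝ := x ⬝ᵥ (Ω *ᵥ φ) with hc
      have h0 := (posSemidef_iff_dotProduct_mulVec.mp hΩ.posSemidef).2 (x - (c / s) • φ)
      rw [star_trivial] at h0
      have hx1 : (x - (c / s) • φ) ⬝ᵥ (Ω *ᵥ (x - (c / s) • φ))
          = x ⬝ᵥ (Ω *ᵥ x) - 2 * (c / s) * c + (c / s)^2 * s := by
        simp only [mulVec_sub, mulVec_smul, dotProduct_sub, sub_dotProduct,
          smul_dotProduct, dotProduct_smul, smul_eq_mul, hsymm x, ← hs, ← hc]
        ring
      rw [hx1] at h0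
      have h1 : (c / s)^2 * s = c^2 / s := by field_simp
      have h2 : 2 * (c / s) * c = 2 * (c^2 / s) := by field_simp
      rw [h1, h2] at h0
      have h3 : c^2 / s ≤ x ⬝ᵥ (Ω *ᵥ x) := by linarith
      calc c^2 = (c^2 / s) * s := by field_simp
        _ ≤ (x ⬝ᵥ (Ω *ᵥ x)) * s := by
            exact mul_le_mul_of_nonneg_right h3 hs_pos.le
    have expand : x ⬝ᵥ (((Ω - (μ * s⁻¹) • vecMulVec (Ω *ᵥ φ) (Ω *ᵥ φ)
          + (1 + φ ⬝ᵥ φ)⁻¹ • vecMulVec φ φ) - (1 - μ) • Ω) *ᵥ x)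
        = μ * (x ⬝ᵥ (Ω *ᵥ x) - (x ⬝ᵥ (Ω *ᵥ φ))^2 / s)
          + (1 + φ ⬝ᵥ φ)⁻¹ * (φ ⬝ᵥ x)^2 := by
      have h1 : x ⬝ᵥ (vecMulVec (Ω *ᵥ φ) (Ω *ᵥ φ)) *ᵥ x
          = (x ⬝ᵥ (Ω *ᵥ φ)) * ((Ω *ᵥ φ) ⬝ᵥ x) := dot_vecMulVec _ _ _ _
      have h2 : x ⬝ᵥ (vecMulVec φ φ) *ᵥ x = (x ⬝ᵥ φ) * (φ ⬝ᵥ x) := dot_vecMulVec _ _ _ _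
      have h3 : (Ω *ᵥ φ) ⬝ᵥ x = x ⬝ᵥ (Ω *ᵥ φ) := dotProduct_comm _ _
      have h4 : x ⬝ᵥ φ = φ ⬝ᵥ x := dotProduct_comm _ _
      simp only [sub_mulVec, add_mulVec, smul_mulVec, dotProduct_sub, dotProduct_add,
        dotProduct_smul, smul_eq_mul, h1, h2, h3, h4]
      field_simp
      ring
    rw [expand]
    have hnn : 0 ≤ x ⬝ᵥ (Ω *ᵥ x) - (x ⬝ᵥ (Ω *ᵥ φ))^2 / s := by
      rw [sub_nonneg, div_le_iff₀ hs_pos]; exact hcs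
    have t1 := mul_nonneg hμ0 hnn
    have t2 := mul_nonneg (le_of_lt (inv_pos.mpr hm)) (sq_nonneg (φ ⬝ᵥ x))
    linarith
  have hherm : ((Ω - (μ * s⁻¹) • vecMulVec (Ω *ᵥ φ) (Ω *ᵥ φ)
      + (1 + φ ⬝ᵥ φ)⁻¹ • vecMulVec φ φ)).IsHermitian := by
    ext i j
    simp only [conjTranspose_apply, Matrix.sub_apply, Matrix.add_apply, Matrix.smul_apply, vecMulVec_apply,
      smul_eq_mul, star_trivial]
    rw [hΩsym i j]; ring
  have hPSD : Matrix.PosSemidef ((Ω - (μ * s⁻¹) • vecMulVec (Ω *ᵥ φ) (Ω *ᵥ φ)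
      + (1 + φ ⬝ᵥ φ)⁻¹ • vecMulVec φ φ) - (1 - μ) • Ω) := by
    refine posSemidef_iff_dotProduct_mulVec.mpr ⟨?_, fun x => by simpa [star_trivial] using key x⟩
    ext i j
    simp only [conjTranspose_apply, Matrix.sub_apply, Matrix.add_apply, Matrix.smul_apply, vecMulVec_apply,
      smul_eq_mul, star_trivial]
    rw [hΩsym i j]; ring
  refine ⟨hPSD, ?_⟩
  have hPD : ((1 - μ) • Ω).PosDef := by
    refine posDef_iff_dotProduct_mulVec.mpr ⟨?_, fun x hx => ?_⟩
    · ext i j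
      simp only [conjTranspose_apply, Matrix.smul_apply, smul_eq_mul, star_trivial]
      rw [hΩsym i j]
    · have := (posDef_iff_dotProduct_mulVec.mp hΩ).2 hx
      rw [star_trivial] at this ⊢
      simp only [smul_mulVec, dotProduct_smul, smul_eq_mul]
      exact mul_pos (by linarith) this
  have hsum := Matrix.PosDef.posSemidef_add hPSD hPD
  have heq : (Ω - (μ * s⁻¹) • vecMulVec (Ω *ᵥ φ) (Ω *ᵥ φ)
      + (1 + φ ⬝ᵥ φ)⁻¹ • vecMulVec φ φ) - (1 - μ) • Ω + (1 - μ) • Ω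
      = (Ω - (μ * s⁻¹) • vecMulVec (Ω *ᵥ φ) (Ω *ᵥ φ)
      + (1 + φ ⬝ᵥ φ)⁻¹ • vecMulVec φ φ) := by abel
  rwa [heq] at hsum
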